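/- For all integers n ≥ 1 and v ≥ 2n, the least distortion of an embedding of the Johnson graph J(v,n) into Euclidean space equals √n, i.e. c_2(J(v,n)) = √n. -/

import Mathlib

open scoped BigOperators

/-- The least distortion `c₂(G)` of an embedding of the connected graph `G`
(with its shortest path metric) into Euclidean space. -/
noncomputable def leastDistortion {V : Type*} [Fintype V] (G : SimpleGraph V) : ℝ :=
  sInf {D : ℝ | ∃ (m : ℕ) (ρ : V → EuclideanSpace ℝ (Fin m)),
    ∀ x y : V, (G.dist x y : ℝ) ≤ ‖ρ x - ρ y‖ ∧ ‖ρ x - ρ y‖ ≤ D * (G.dist x y : ℝ)}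

/-- The Johnson graph `J(v, n)`: vertices are the `n`-element subsets of a
`v`-element set, two being adjacent iff their intersection has `n − 1` elements. -/
def johnsonGraph (v n : ℕ) : SimpleGraph {s : Finset (Fin v) // s.card = n} where
  Adj x y := x ≠ y ∧ (x.1 ∩ y.1).card = n - 1
  symm := ⟨by
    intro x y ⟨h1, h2⟩
    exact ⟨h1.symm, by rwa [Finset.inter_comm]⟩⟩
  loopless := ⟨fun x h => h.1 rfl⟩

section Aux

open Finset



variable {v n : ℕ}

lemma johnson_exists_walk (x y : {s : Finset (Fin v) // s.card = n}) :
    ∃ w : (johnsonGraph v n).Walk x y, w.length = n - (x.1 ∩ y.1).card := by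
  generalize hk : n - (x.1 ∩ y.1).card = k
  induction k generalizing x y with
  | zero =>
    have hc : x.1 ∩ y.1 ⊆ x.1 := Finset.inter_subset_left
    have hcc : (x.1 ∩ y.1).card ≤ n := by have := Finset.card_le_card hc; rw [x.2] at this; exact this
    have hn : (x.1 ∩ y.1).card = n := by omega
    have hxy : x = y := by
      have h1 : x.1 ∩ y.1 = x.1 := Finset.eq_of_subset_of_card_le hc (by omega)
      have h2 : x.1 ⊆ y.1 := by rw [← h1]; exact Finset.inter_subset_right
      exact Subtype.ext (Finset.eq_of_subset_of_card_le h2 (by rw [x.2, y.2]))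
    subst hxy
    exact ⟨SimpleGraph.Walk.nil, rfl⟩
  | succ k ih =>
    have hcx : (x.1 ∩ y.1).card < n := by omega
    have hax : (x.1 \ y.1).Nonempty := by
      rw [← Finset.card_pos]
      have := Finset.card_sdiff_add_card_inter x.1 y.1
      omega
    have hby : (y.1 \ x.1).Nonempty := by
      rw [← Finset.card_pos]
      have := Finset.card_sdiff_add_card_inter y.1 x.1
      rw [Finset.inter_comm] at this
      omega
    obtain ⟨a, ha⟩ := hax
    obtain ⟨b, hb⟩ := hby
    rw [Finset.mem_sdiff] at ha hb
    have hab : a ≠ b := fun h => hb.2 (h ▸ ha.1)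
    have hbe : b ∉ x.1.erase a := fun h => hb.2 (Finset.mem_of_mem_erase h)
    have hcard : (insert b (x.1.erase a)).card = n := by
      rw [Finset.card_insert_of_notMem hbe, Finset.card_erase_of_mem ha.1, x.2]
      omega
    set x' : {s : Finset (Fin v) // s.card = n} := ⟨insert b (x.1.erase a), hcard⟩ with hx'
    have hxx' : x.1 ∩ x'.1 = x.1.erase a := by
      ext t
      simp only [Finset.mem_inter, hx', Finset.mem_insert, Finset.mem_erase]
      constructor
      · rintro ⟨ht, (rfl | ⟨hta, htx⟩)⟩
        · exact absurd ht hb.2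
        · exact ⟨hta, ht⟩
      · rintro ⟨hta, htx⟩
        exact ⟨htx, Or.inr ⟨hta, htx⟩⟩
    have hadj : (johnsonGraph v n).Adj x x' := by
      refine ⟨fun h => ?_, by rw [hxx', Finset.card_erase_of_mem ha.1, x.2]⟩
      have : a ∈ x'.1 := h ▸ ha.1
      simp only [hx', Finset.mem_insert, Finset.mem_erase] at this
      rcases this with h1 | h1
      · exact hab h1
      · exact h1.1 rfl
    have hx'y : x'.1 ∩ y.1 = insert b (x.1 ∩ y.1) := by
      have h1 : insert b (x.1.erase a) ∩ y.1 = insert b (x.1.erase a ∩ y.1) :=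
        Finset.insert_inter_of_mem hb.1
      have h2 : x.1.erase a ∩ y.1 = x.1 ∩ y.1 := by
        rw [Finset.erase_inter, Finset.erase_eq_of_notMem]
        simp only [Finset.mem_inter]
        exact fun h => ha.2 h.2
      rw [hx']
      simpa [h2] using h1
    have hbint : b ∉ x.1 ∩ y.1 := by
      simp only [Finset.mem_inter]
      exact fun h => hb.2 h.1
    have hcard' : n - (x'.1 ∩ y.1).card = k := by
      rw [hx'y, Finset.card_insert_of_notMem hbint]
      omega
    obtain ⟨w, hw⟩ := ih x' y hcard'
    exact ⟨SimpleGraph.Walk.cons hadj w, by simp [hw]⟩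

lemma johnson_walk_ge {x y : {s : Finset (Fin v) // s.card = n}}
    (w : (johnsonGraph v n).Walk x y) : n ≤ w.length + (x.1 ∩ y.1).card := by
  induction w with
  | @nil u => simp [Finset.inter_self, u.2]
  | @cons x z y h w ih =>
    have h1 : (z.1 ∩ y.1).card ≤ (x.1 ∩ y.1).card + 1 := by
      have hsub : z.1 ∩ y.1 ⊆ (x.1 ∩ y.1) ∪ (z.1 \ x.1) := by
        intro t ht
        rw [Finset.mem_inter] at ht
        by_cases htx : t ∈ x.1
        · exact Finset.mem_union_left _ (Finset.mem_inter.mpr ⟨htx, ht.2⟩)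
        · exact Finset.mem_union_right _ (Finset.mem_sdiff.mpr ⟨ht.1, htx⟩)
      have hzx : (z.1 \ x.1).card = 1 := by
        have := Finset.card_sdiff_add_card_inter z.1 x.1
        rw [z.2] at this
        have h2 : (z.1 ∩ x.1).card = n - 1 := by rw [Finset.inter_comm]; exact h.2
        have hn1 : 1 ≤ n := by
          by_contra hc
          have hn0 : n = 0 := by omega
          apply h.1
          have : x.1 = ∅ := Finset.card_eq_zero.mp (by rw [x.2, hn0])
          have : z.1 = ∅ := Finset.card_eq_zero.mp (by rw [z.2, hn0])
          exact Subtype.ext (by simp_all)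
        omega
      have hn1 : 1 ≤ n := by
        have := Finset.card_le_card (Finset.inter_subset_left : z.1 ∩ x.1 ⊆ z.1)
        rw [z.2] at this
        have h2 := h.2
        rw [Finset.inter_comm] at h2
        by_contra hc
        have hn0 : n = 0 := by omega
        apply h.1
        exact Subtype.ext (by
          have hx0 : x.1 = ∅ := Finset.card_eq_zero.mp (by rw [x.2, hn0])
          have hz0 : z.1 = ∅ := Finset.card_eq_zero.mp (by rw [z.2, hn0])
          rw [hx0, hz0])
      have h2n := h.2
      calc (z.1 ∩ y.1).card ≤ ((x.1 ∩ y.1) ∪ (z.1 \ x.1)).card := Finset.card_le_card hsub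
        _ ≤ (x.1 ∩ y.1).card + (z.1 \ x.1).card := Finset.card_union_le _ _
        _ = (x.1 ∩ y.1).card + 1 := by rw [hzx]
    simp only [SimpleGraph.Walk.length_cons]
    omega

lemma johnson_dist (x y : {s : Finset (Fin v) // s.card = n}) :
    (johnsonGraph v n).dist x y = n - (x.1 ∩ y.1).card := by
  obtain ⟨w, hw⟩ := johnson_exists_walk x y
  refine le_antisymm (hw ▸ SimpleGraph.dist_le w) ?_
  obtain ⟨w', hw'⟩ := SimpleGraph.Reachable.exists_walk_length_eq_dist ⟨w⟩
  have := johnson_walk_ge w'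
  omega


lemma quad_ineq (a b c d : ℝ) :
    (a - d)^2 + (b - c)^2 ≤ (a - b)^2 + (c - d)^2 + (a - c)^2 + (b - d)^2 := by
  nlinarith [sq_nonneg (a - b - c + d)]

lemma enflo_cube : ∀ (n : ℕ) (f : (Fin n → Bool) → ℝ),
    ∑ x : Fin n → Bool, (f x - f (fun i => !(x i)))^2 ≤
      ∑ x : Fin n → Bool, ∑ i : Fin n, (f x - f (Function.update x i (!(x i))))^2 := by
  intro n
  induction n with
  | zero =>
    intro f
    have h : ∀ x : Fin 0 → Bool, (fun i => !(x i)) = x := fun x => funext fun i => i.elim0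
    simp [h]
  | succ n ih =>
    intro f
    set e : (Bool × (Fin n → Bool)) ≃ (Fin (n+1) → Bool) := Fin.consEquiv (fun _ => Bool) with he
    have hL : ∑ x : Fin (n+1) → Bool, (f x - f (fun i => !(x i)))^2
        = ∑ p : Bool × (Fin n → Bool),
            (f (Fin.cons p.1 p.2) - f (fun i => !((Fin.cons p.1 p.2 : Fin (n+1) → Bool) i)))^2 :=
      (Fintype.sum_equiv e _ _ (fun p => rfl)).symm
    have hR : ∑ x : Fin (n+1) → Bool, ∑ i : Fin (n+1), (f x - f (Function.update x i (!(x i))))^2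
        = ∑ p : Bool × (Fin n → Bool), ∑ i : Fin (n+1),
            (f (Fin.cons p.1 p.2) - f (Function.update (Fin.cons p.1 p.2) i
              (!((Fin.cons p.1 p.2 : Fin (n+1) → Bool) i))))^2 :=
      (Fintype.sum_equiv e _ _ (fun p => rfl)).symm
    rw [hL, hR]
    rw [Fintype.sum_prod_type, Fintype.sum_prod_type]
    -- abbreviations
    set F : Bool → (Fin n → Bool) → ℝ := fun b y => f (Fin.cons b y) with hF
    set N : (Fin n → Bool) → (Fin n → Bool) := fun y i => !(y i) with hN
    -- rewrite antipode of cons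
    have hanti : ∀ (b : Bool) (y : Fin n → Bool),
        (fun i => !((Fin.cons b y : Fin (n+1) → Bool) i)) = (Fin.cons (!b) (N y) : Fin (n+1) → Bool) := by
      intro b y
      funext i
      refine Fin.cases ?_ ?_ i <;> simp [hN]
    -- rewrite the inner sum over Fin (n+1)
    have hinner : ∀ (b : Bool) (y : Fin n → Bool),
        ∑ i : Fin (n+1), (f (Fin.cons b y) - f (Function.update (Fin.cons b y) i
            (!((Fin.cons b y : Fin (n+1) → Bool) i))))^2
        = (F b y - F (!b) y)^2 + ∑ i : Fin n, (F b y - F b (Function.update y i (!(y i))))^2 := by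
      intro b y
      rw [Fin.sum_univ_succ]
      congr 1
      · rw [Fin.cons_zero, Fin.update_cons_zero]
      · apply Finset.sum_congr rfl
        intro i _
        rw [Fin.cons_succ, ← Fin.cons_update]
    simp only [hanti, hinner]
    -- now sum over b : Bool explicitly
    rw [Fintype.sum_bool, Fintype.sum_bool]
    simp only [Bool.not_true, Bool.not_false]
    simp only [show ∀ (b : Bool) (y : Fin n → Bool), f (Fin.cons b y) = F b y from fun _ _ => rfl]
    have key : ∀ y : Fin n → Bool,
        (F true y - F false (N y))^2 + (F false y - F true (N y))^2
        ≤ (F true y - F false y)^2 + (F true (N y) - F false (N y))^2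
          + (F true y - F true (N y))^2 + (F false y - F false (N y))^2 :=
      fun y => quad_ineq (F true y) (F false y) (F true (N y)) (F false (N y))
    have hNinv : Function.Involutive N := fun y => funext fun i => Bool.not_not (y i)
    have hswap : ∑ y : Fin n → Bool, (F true (N y) - F false (N y))^2
        = ∑ y : Fin n → Bool, (F true y - F false y)^2 :=
      Equiv.sum_comp hNinv.toPerm (fun y => (F true y - F false y)^2)
    have hIH1 : ∑ y : Fin n → Bool, (F true y - F true (N y))^2
        ≤ ∑ y : Fin n → Bool, ∑ i : Fin n, (F true y - F true (Function.update y i (!(y i))))^2 :=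
      ih (F true)
    have hIH0 : ∑ y : Fin n → Bool, (F false y - F false (N y))^2
        ≤ ∑ y : Fin n → Bool, ∑ i : Fin n, (F false y - F false (Function.update y i (!(y i))))^2 :=
      ih (F false)
    have hflip : ∑ y : Fin n → Bool, (F false y - F true y)^2
        = ∑ y : Fin n → Bool, (F true y - F false y)^2 := by
      apply Finset.sum_congr rfl; intro y _; ring
    have hsum := Finset.sum_le_sum (fun y (_ : y ∈ Finset.univ) => key y)
    simp only [Finset.sum_add_distrib] at hsum ⊢
    rw [hswap] at hsum
    rw [hflip]
    linarith [hsum, hIH1, hIH0]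


def jembf (hn : 1 ≤ n) (hv : 2 * n ≤ v) (x : Fin n → Bool) (i : Fin n) : Fin v :=
  ⟨if x i then n + i.val else i.val, by have := i.isLt; split <;> omega⟩

lemma jembf_eq (hn : 1 ≤ n) (hv : 2 * n ≤ v) {x y : Fin n → Bool} {i j : Fin n}
    (h : jembf hn hv x i = jembf hn hv y j) : i = j ∧ x i = y j := by
  have hi := i.isLt
  have hj := j.isLt
  have hval : (if x i then n + i.val else i.val) = (if y j then n + j.val else j.val) :=
    congrArg Fin.val h
  cases hxi : x i <;> cases hyj : y j <;> simp [hxi, hyj] at hval <;>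
    first
    | exact ⟨Fin.ext hval, rfl⟩
    | omega


def jphi (hn : 1 ≤ n) (hv : 2 * n ≤ v) (x : Fin n → Bool) : {s : Finset (Fin v) // s.card = n} :=
  ⟨Finset.image (jembf hn hv x) Finset.univ, by
    rw [Finset.card_image_of_injective _ (fun i j h => (jembf_eq hn hv h).1)]
    simp⟩

lemma jphi_inter (hn : 1 ≤ n) (hv : 2 * n ≤ v) (x y : Fin n → Bool) :
    (jphi hn hv x).1 ∩ (jphi hn hv y).1
      = Finset.image (jembf hn hv x) (Finset.univ.filter fun i => x i = y i) := by
  ext t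
  simp only [Finset.mem_inter, jphi, Finset.mem_image, Finset.mem_filter, Finset.mem_univ,
    true_and]
  constructor
  · rintro ⟨⟨i, rfl⟩, ⟨j, hj⟩⟩
    obtain ⟨rfl, hxy⟩ := jembf_eq hn hv hj.symm
    exact ⟨_, hxy, rfl⟩
  · rintro ⟨i, hxy, rfl⟩
    refine ⟨⟨i, rfl⟩, ⟨i, ?_⟩⟩
    simp [jembf, hxy]

lemma jphi_inter_card (hn : 1 ≤ n) (hv : 2 * n ≤ v) (x y : Fin n → Bool) :
    ((jphi hn hv x).1 ∩ (jphi hn hv y).1).card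
      = (Finset.univ.filter fun i => x i = y i).card := by
  rw [jphi_inter hn hv x y,
    Finset.card_image_of_injective _ (fun i j h => (jembf_eq hn hv h).1)]

lemma jphi_flip_card (hn : 1 ≤ n) (hv : 2 * n ≤ v) (x : Fin n → Bool) (i₀ : Fin n) :
    ((jphi hn hv x).1 ∩ (jphi hn hv (Function.update x i₀ (!(x i₀)))).1).card = n - 1 := by
  rw [jphi_inter_card]
  have : (Finset.univ.filter fun i => x i = Function.update x i₀ (!(x i₀)) i)
      = Finset.univ.erase i₀ := by
    ext i
    by_cases h : i = i₀
    · subst h; simp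
    · simp [h, Function.update_of_ne h]
  rw [this, Finset.card_erase_of_mem (Finset.mem_univ _)]
  simp

lemma jphi_anti_card (hn : 1 ≤ n) (hv : 2 * n ≤ v) (x : Fin n → Bool) :
    ((jphi hn hv x).1 ∩ (jphi hn hv (fun i => !(x i))).1).card = 0 := by
  rw [jphi_inter_card]
  simp


noncomputable def jrho (v n : ℕ) (s : {s : Finset (Fin v) // s.card = n}) :
    EuclideanSpace ℝ (Fin v) :=
  WithLp.toLp 2 (fun i => if i ∈ s.1 then Real.sqrt (n / 2) else 0)

lemma jrho_norm (v n : ℕ) (x y : {s : Finset (Fin v) // s.card = n}) :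
    ‖jrho v n x - jrho v n y‖ = Real.sqrt ((n : ℝ) * ((n - (x.1 ∩ y.1).card : ℕ) : ℝ)) := by
  have hc : ((x.1 ∩ y.1).card : ℝ) ≤ n := by
    have h1 : (x.1 ∩ y.1).card ≤ n := by
      have := Finset.card_le_card (Finset.inter_subset_left : x.1 ∩ y.1 ⊆ x.1)
      rw [x.2] at this; exact this
    exact_mod_cast h1
  rw [EuclideanSpace.norm_eq]
  congr 1
  have h1n : (x.1 ∩ y.1).card ≤ n := by exact_mod_cast hc
  set c := Real.sqrt ((n : ℝ) / 2) with hcdef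
  have hsq : c ^ 2 = (n / 2 : ℝ) := Real.sq_sqrt (by positivity)
  have hterm : ∀ i : Fin v, ‖(jrho v n x - jrho v n y) i‖ ^ 2
      = (n / 2 : ℝ) * ((if i ∈ x.1 then (1:ℝ) else 0) + (if i ∈ y.1 then (1:ℝ) else 0)
          - 2 * (if i ∈ x.1 ∩ y.1 then (1:ℝ) else 0)) := by
    intro i
    have happ : (jrho v n x - jrho v n y) i
        = (if i ∈ x.1 then c else 0) - (if i ∈ y.1 then c else 0) := rfl
    rw [happ, Real.norm_eq_abs, sq_abs]
    by_cases h1 : i ∈ x.1 <;> by_cases h2 : i ∈ y.1 <;>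
      simp only [h1, h2, Finset.mem_inter, and_self, and_true, true_and, and_false, false_and,
        if_true, if_false] <;>
      first
        | linear_combination hsq
        | ring
        | simp
  rw [Finset.sum_congr rfl (fun i _ => hterm i)]
  rw [← Finset.mul_sum]
  have hs1 : ∀ s : Finset (Fin v), ∑ i : Fin v, (if i ∈ s then (1:ℝ) else 0) = s.card := by
    intro s
    rw [Finset.sum_ite_mem]
    simp
  rw [Finset.sum_sub_distrib, Finset.sum_add_distrib, ← Finset.mul_sum, hs1, hs1, hs1,
    x.2, y.2, Nat.cast_sub h1n]
  ring


lemma sqrt_bounds {n d : ℕ} (hd : d ≤ n) :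
    (d : ℝ) ≤ Real.sqrt ((n : ℝ) * d) ∧ Real.sqrt ((n : ℝ) * d) ≤ Real.sqrt n * d := by
  have hdn : (d : ℝ) ≤ n := by exact_mod_cast hd
  constructor
  · rw [Real.le_sqrt (by positivity) (by positivity)]
    nlinarith
  · rw [Real.sqrt_mul (by positivity)]
    refine mul_le_mul_of_nonneg_left ?_ (Real.sqrt_nonneg _)
    rcases Nat.eq_zero_or_pos d with h0 | h1
    · simp [h0]
    · have h1' : (1 : ℝ) ≤ d := by exact_mod_cast h1
      calc Real.sqrt d ≤ Real.sqrt ((d : ℝ) ^ 2) := Real.sqrt_le_sqrt (by nlinarith)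
        _ = d := Real.sqrt_sq (by positivity)

lemma norm_sq_euclidean {m : ℕ} (a b : EuclideanSpace ℝ (Fin m)) :
    ‖a - b‖ ^ 2 = ∑ j : Fin m, (a j - b j) ^ 2 := by
  rw [EuclideanSpace.norm_eq, Real.sq_sqrt (by positivity)]
  refine Finset.sum_congr rfl fun j _ => ?_
  have h : (a - b) j = a j - b j := rfl
  rw [h, Real.norm_eq_abs, sq_abs]

lemma sqrtn_mem (v n : ℕ) (hn : 1 ≤ n) :
    Real.sqrt n ∈ {D : ℝ | ∃ (m : ℕ) (ρ : {s : Finset (Fin v) // s.card = n} → EuclideanSpace ℝ (Fin m)),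
      ∀ x y, ((johnsonGraph v n).dist x y : ℝ) ≤ ‖ρ x - ρ y‖ ∧
        ‖ρ x - ρ y‖ ≤ Real.sqrt n * ((johnsonGraph v n).dist x y : ℝ)} := by
  refine ⟨v, jrho v n, fun x y => ?_⟩
  have hcard : (x.1 ∩ y.1).card ≤ n := by
    have := Finset.card_le_card (Finset.inter_subset_left : x.1 ∩ y.1 ⊆ x.1)
    rw [x.2] at this; exact this
  have hd : n - (x.1 ∩ y.1).card ≤ n := Nat.sub_le _ _
  obtain ⟨hb1, hb2⟩ := sqrt_bounds (n := n) (d := n - (x.1 ∩ y.1).card) hd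
  rw [johnson_dist, jrho_norm]
  exact ⟨hb1, hb2⟩

lemma sqrtn_lb (v n : ℕ) (hn : 1 ≤ n) (hv : 2 * n ≤ v) (D : ℝ)
    (hD : ∃ (m : ℕ) (ρ : {s : Finset (Fin v) // s.card = n} → EuclideanSpace ℝ (Fin m)),
      ∀ x y, ((johnsonGraph v n).dist x y : ℝ) ≤ ‖ρ x - ρ y‖ ∧
        ‖ρ x - ρ y‖ ≤ D * ((johnsonGraph v n).dist x y : ℝ)) :
    Real.sqrt n ≤ D := by
  obtain ⟨m, ρ, hρ⟩ := hD
  set g : (Fin n → Bool) → EuclideanSpace ℝ (Fin m) := fun x => ρ (jphi hn hv x) with hg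
  have hdist_flip : ∀ (x : Fin n → Bool) (i : Fin n),
      (johnsonGraph v n).dist (jphi hn hv x) (jphi hn hv (Function.update x i (!(x i)))) = 1 := by
    intro x i
    rw [johnson_dist, jphi_flip_card]
    omega
  have hdist_anti : ∀ (x : Fin n → Bool),
      (johnsonGraph v n).dist (jphi hn hv x) (jphi hn hv (fun i => !(x i))) = n := by
    intro x
    rw [johnson_dist, jphi_anti_card]
    omega
  -- D is at least 1, hence nonnegative
  have hD1 : (1 : ℝ) ≤ D := by
    set x₀ : Fin n → Bool := fun _ => false
    set i₀ : Fin n := ⟨0, hn⟩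
    have h := hρ (jphi hn hv x₀) (jphi hn hv (Function.update x₀ i₀ (!(x₀ i₀))))
    rw [hdist_flip x₀ i₀] at h
    push_cast at h
    calc (1:ℝ) ≤ ‖_ - _‖ := h.1
      _ ≤ D * 1 := h.2
      _ = D := mul_one D
  have hD0 : (0 : ℝ) ≤ D := le_trans zero_le_one hD1
  -- Enflo inequality for g, coordinatewise
  have henf : ∑ x : Fin n → Bool, ‖g x - g (fun i => !(x i))‖ ^ 2
      ≤ ∑ x : Fin n → Bool, ∑ i : Fin n, ‖g x - g (Function.update x i (!(x i)))‖ ^ 2 := by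
    calc ∑ x : Fin n → Bool, ‖g x - g (fun i => !(x i))‖ ^ 2
        = ∑ x : Fin n → Bool, ∑ j : Fin m, (g x j - g (fun i => !(x i)) j) ^ 2 :=
          Finset.sum_congr rfl fun x _ => norm_sq_euclidean _ _
      _ = ∑ j : Fin m, ∑ x : Fin n → Bool, (g x j - g (fun i => !(x i)) j) ^ 2 :=
          Finset.sum_comm
      _ ≤ ∑ j : Fin m, ∑ x : Fin n → Bool, ∑ i : Fin n,
            (g x j - g (Function.update x i (!(x i))) j) ^ 2 :=
          Finset.sum_le_sum fun j _ => enflo_cube n (fun x => g x j)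
      _ = ∑ x : Fin n → Bool, ∑ j : Fin m, ∑ i : Fin n,
            (g x j - g (Function.update x i (!(x i))) j) ^ 2 := Finset.sum_comm
      _ = ∑ x : Fin n → Bool, ∑ i : Fin n, ∑ j : Fin m,
            (g x j - g (Function.update x i (!(x i))) j) ^ 2 :=
          Finset.sum_congr rfl fun x _ => Finset.sum_comm
      _ = ∑ x : Fin n → Bool, ∑ i : Fin n, ‖g x - g (Function.update x i (!(x i)))‖ ^ 2 :=
          Finset.sum_congr rfl fun x _ => Finset.sum_congr rfl fun i _ =>
            (norm_sq_euclidean _ _).symm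
  set K : ℕ := Fintype.card (Fin n → Bool) with hK
  have hKpos : 0 < (K : ℝ) := by
    have : 0 < K := Fintype.card_pos
    exact_mod_cast this
  have hlow : (K : ℝ) * (n : ℝ) ^ 2 ≤ ∑ x : Fin n → Bool, ‖g x - g (fun i => !(x i))‖ ^ 2 := by
    have hterm : ∀ x : Fin n → Bool, (n : ℝ) ^ 2 ≤ ‖g x - g (fun i => !(x i))‖ ^ 2 := by
      intro x
      have h := (hρ (jphi hn hv x) (jphi hn hv (fun i => !(x i)))).1
      rw [hdist_anti x] at h
      have hn0 : (0:ℝ) ≤ n := by positivity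
      nlinarith
    calc (K : ℝ) * (n : ℝ) ^ 2 = ∑ _x : Fin n → Bool, (n : ℝ) ^ 2 := by
          rw [Finset.sum_const, hK]
          simp [mul_comm]
      _ ≤ _ := Finset.sum_le_sum fun x _ => hterm x
  have hhigh : ∑ x : Fin n → Bool, ∑ i : Fin n, ‖g x - g (Function.update x i (!(x i)))‖ ^ 2
      ≤ (K : ℝ) * ((n : ℝ) * D ^ 2) := by
    have hterm : ∀ (x : Fin n → Bool) (i : Fin n),
        ‖g x - g (Function.update x i (!(x i)))‖ ^ 2 ≤ D ^ 2 := by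
      intro x i
      have h := hρ (jphi hn hv x) (jphi hn hv (Function.update x i (!(x i))))
      rw [hdist_flip x i] at h
      push_cast at h
      have h2 := h.2
      rw [mul_one] at h2
      nlinarith [norm_nonneg (g x - g (Function.update x i (!(x i)))), h.1]
    calc ∑ x : Fin n → Bool, ∑ i : Fin n, ‖g x - g (Function.update x i (!(x i)))‖ ^ 2
        ≤ ∑ _x : Fin n → Bool, ∑ _i : Fin n, D ^ 2 :=
          Finset.sum_le_sum fun x _ => Finset.sum_le_sum fun i _ => hterm x i
      _ = (K : ℝ) * ((n : ℝ) * D ^ 2) := by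
          rw [Finset.sum_const, Finset.sum_const, hK]
          simp [mul_assoc, mul_comm]
  have hmain : (n : ℝ) ^ 2 ≤ (n : ℝ) * D ^ 2 := by
    have h := le_trans hlow (le_trans henf hhigh)
    exact le_of_mul_le_mul_left (by linarith) hKpos
  have hnpos : (0:ℝ) < n := by exact_mod_cast hn
  have hfin : (n : ℝ) ≤ D ^ 2 := by
    have := mul_le_mul_of_nonneg_left hmain (le_of_lt (inv_pos.mpr hnpos))
    calc (n:ℝ) = (n:ℝ)⁻¹ * (n:ℝ)^2 := by field_simp
      _ ≤ (n:ℝ)⁻¹ * ((n:ℝ) * D^2) := mul_le_mul_of_nonneg_left hmain (by positivity)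
      _ = D ^ 2 := by field_simp
  calc Real.sqrt n ≤ Real.sqrt (D ^ 2) := Real.sqrt_le_sqrt hfin
    _ = D := Real.sqrt_sq hD0

end Aux

theorem stmt9 (v n : ℕ) (hn : 1 ≤ n) (hv : 2 * n ≤ v) :
    leastDistortion (johnsonGraph v n) = Real.sqrt n := by
  unfold leastDistortion
  have hmem := sqrtn_mem v n hn
  have hlb : ∀ D ∈ {D : ℝ | ∃ (m : ℕ) (ρ : {s : Finset (Fin v) // s.card = n} → EuclideanSpace ℝ (Fin m)),
      ∀ x y, ((johnsonGraph v n).dist x y : ℝ) ≤ ‖ρ x - ρ y‖ ∧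
        ‖ρ x - ρ y‖ ≤ D * ((johnsonGraph v n).dist x y : ℝ)}, Real.sqrt n ≤ D :=
    fun D hD => sqrtn_lb v n hn hv D hD
  exact le_antisymm (csInf_le ⟨Real.sqrt n, hlb⟩ hmem) (le_csInf ⟨_, hmem⟩ hlb)
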